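/- Let n ≥ 1, ρ ∈ (0, 1], and let ξ₁, …, ξ_n be i.i.d. Bernoulli(1 − ρ) random variables, with V_k = Σ_{j=1}^k ξ_j. Define M = max( 1, 1 + n·(1 − 2ρ − (1 − ρ)·ρ^n)/ρ ). Let T be any reverse stopping time with values in {1, …, n}, i.e. {T = k} ∈ G_k for every k, where G_k = σ(V_j : k ≤ j ≤ n). Then E[ V_T / (M + T − V_T) ] ≤ 1. -/

import Mathlib

open MeasureTheory ProbabilityTheory Finset
open scoped ENNReal


/-- count of `true`s among first `k` coordinates of a Boolean vector. -/
def bcount (n : ℕ) (x : Fin n → Bool) (k : ℕ) : ℕ :=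
  (Finset.univ.filter (fun j : Fin n => (j : ℕ) < k ∧ x j = true)).card

lemma bcount_le (n : ℕ) (x : Fin n → Bool) (k : ℕ) : bcount n x k ≤ k := by
  classical
  have h : bcount n x k = (Finset.univ.filter (fun j : Fin n => (j : ℕ) < k ∧ x j = true)).card := rfl
  rw [h]
  have : ∀ j ∈ Finset.univ.filter (fun j : Fin n => (j : ℕ) < k ∧ x j = true),
      (j : ℕ) ∈ Finset.range k := by
    intro j hj
    simp only [Finset.mem_filter] at hj
    exact Finset.mem_range.2 hj.2.1
  calc (Finset.univ.filter (fun j : Fin n => (j : ℕ) < k ∧ x j = true)).card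
      ≤ (Finset.range k).card := Finset.card_le_card_of_injOn _ this
        (Fin.val_injective.injOn)
    _ = k := Finset.card_range k

lemma bcount_succ {n : ℕ} (x : Fin n → Bool) {k : ℕ} (hk : k < n) :
    bcount n x (k + 1) = bcount n x k + (if x ⟨k, hk⟩ = true then 1 else 0) := by
  classical
  unfold bcount
  have hsplit : (Finset.univ.filter (fun j : Fin n => (j : ℕ) < k + 1 ∧ x j = true))
      = (Finset.univ.filter (fun j : Fin n => (j : ℕ) < k ∧ x j = true)) ∪
        (Finset.univ.filter (fun j : Fin n => j = ⟨k, hk⟩ ∧ x j = true)) := by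
    ext j
    simp only [Finset.mem_filter, Finset.mem_union, Finset.mem_univ, true_and]
    constructor
    · rintro ⟨h1, h2⟩
      rcases Nat.lt_succ_iff_lt_or_eq.1 h1 with h | h
      · exact Or.inl ⟨h, h2⟩
      · exact Or.inr ⟨Fin.ext h, h2⟩
    · rintro (⟨h1, h2⟩ | ⟨h1, h2⟩)
      · exact ⟨Nat.lt_succ_of_lt h1, h2⟩
      · exact ⟨by rw [h1]; exact Nat.lt_succ_self k, h2⟩
  rw [hsplit, Finset.card_union_of_disjoint]
  · congr 1
    by_cases hx : x ⟨k, hk⟩ = true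
    · have : (Finset.univ.filter (fun j : Fin n => j = ⟨k, hk⟩ ∧ x j = true)) = {⟨k, hk⟩} := by
        ext j
        simp only [Finset.mem_filter, Finset.mem_univ, true_and, Finset.mem_singleton]
        constructor
        · rintro ⟨h1, _⟩; exact h1
        · rintro rfl; exact ⟨rfl, hx⟩
      simp [this, hx]
    · have : (Finset.univ.filter (fun j : Fin n => j = ⟨k, hk⟩ ∧ x j = true)) = ∅ := by
        ext j
        simp only [Finset.mem_filter, Finset.mem_univ, true_and, Finset.notMem_empty,
          iff_false, not_and]
        rintro rfl; exact fun h => hx h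
      simp [this, hx]
  · rw [Finset.disjoint_left]
    intro j hj hj'
    simp only [Finset.mem_filter] at hj hj'
    rw [hj'.2.1] at hj
    exact absurd hj.2.1 (lt_irrefl k)

lemma bcount_perm {n : ℕ} (x : Fin n → Bool) (π : Equiv.Perm (Fin n)) {k : ℕ}
    (hπ : ∀ i, ((π i : Fin n) : ℕ) < k ↔ (i : ℕ) < k) :
    bcount n (x ∘ π) k = bcount n x k := by
  classical
  unfold bcount
  apply Finset.card_nbij (fun i => π i)
  · intro a ha
    simp only [Finset.mem_coe, Finset.mem_filter, Finset.mem_univ, true_and, Function.comp_apply] at ha ⊢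
    exact ⟨(hπ a).2 ha.1, ha.2⟩
  · exact (Equiv.injective π).injOn
  · intro b hb
    simp only [Finset.coe_filter, Set.mem_setOf_eq, Finset.mem_univ, true_and] at hb
    refine ⟨π.symm b, ?_, by simp⟩
    simp only [Finset.coe_filter, Set.mem_setOf_eq, Finset.mem_univ, true_and,
      Function.comp_apply, Equiv.apply_symm_apply]
    refine ⟨?_, hb.2⟩
    have := hπ (π.symm b)
    rw [Equiv.apply_symm_apply] at this
    exact this.1 hb.1

lemma swap_val_lt {n : ℕ} (a b : Fin n) {k : ℕ} (ha : (a : ℕ) < k) (hb : (b : ℕ) < k) :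
    ∀ i : Fin n, ((Equiv.swap a b i : Fin n) : ℕ) < k ↔ (i : ℕ) < k := by
  intro i
  rcases eq_or_ne i a with rfl | hia
  · simp [Equiv.swap_apply_left, ha, hb]
  rcases eq_or_ne i b with rfl | hib
  · simp [Equiv.swap_apply_right, ha, hb]
  · rw [Equiv.swap_apply_of_ne_of_ne hia hib]

lemma card_filter_lt {n k : ℕ} (h : k ≤ n) :
    ((Finset.univ : Finset (Fin n)).filter (fun i : Fin n => (i : ℕ) < k)).card = k := by
  classical
  have key : ((Finset.univ : Finset (Fin n)).filter (fun i : Fin n => (i : ℕ) < k)).card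
      = (Finset.range k).card := by
    refine Finset.card_nbij (fun i => (i : ℕ)) ?_ ?_ ?_
    · intro a ha
      simp only [Finset.mem_coe, Finset.mem_filter] at ha
      exact Finset.mem_range.2 ha.2
    · exact Fin.val_injective.injOn
    · intro j hj
      simp only [Finset.coe_range, Set.mem_Iio] at hj
      exact ⟨⟨j, lt_of_lt_of_le hj h⟩, by simp [hj], rfl⟩
  rw [key, Finset.card_range]

lemma bcount_filter_eq {n : ℕ} (x : Fin n → Bool) (k : ℕ) :
    (((Finset.univ : Finset (Fin n)).filter (fun i : Fin n => (i : ℕ) < k)).filter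
      (fun i => x i = true)).card = bcount n x k := by
  classical
  unfold bcount
  rw [Finset.filter_filter]


/-- the process value `v/(M + k - v)` -/
noncomputable def freal (M : ℝ) (k v : ℕ) : ℝ := (v : ℝ) / (M + k - v)

lemma freal_nonneg {M : ℝ} (hM : 1 ≤ M) {k v : ℕ} (hv : v ≤ k + 1) : 0 ≤ freal M k v := by
  apply div_nonneg (by positivity)
  have : (v : ℝ) ≤ (k : ℝ) + 1 := by exact_mod_cast hv
  linarith

/-- one-step supermartingale inequality -/
lemma realA {M : ℝ} (hM : 1 ≤ M) (K u : ℕ) (hu : u ≤ K + 1) :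
    (u : ℝ) * freal M K (u - 1) + ((K + 1 - u : ℕ) : ℝ) * freal M K u
      ≤ ((K : ℝ) + 1) * freal M (K + 1) u := by
  rcases Nat.eq_zero_or_pos u with rfl | hu0
  · simp [freal]
  have hcast : ((u - 1 : ℕ) : ℝ) = (u : ℝ) - 1 := by
    have := Nat.cast_sub hu0 (R := ℝ); simpa using this
  have hcast2 : ((K + 1 - u : ℕ) : ℝ) = (K : ℝ) + 1 - u := by
    have := Nat.cast_sub hu (R := ℝ); push_cast at this ⊢; linarith
  simp only [freal, hcast, hcast2]
  push_cast
  have hu1 : (1 : ℝ) ≤ u := by exact_mod_cast hu0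
  have huR : (u : ℝ) ≤ (K : ℝ) + 1 := by exact_mod_cast hu
  have hd1 : (0:ℝ) < M + K - ((u:ℝ) - 1) := by linarith
  have hd2 : (0:ℝ) ≤ M + K - u := by linarith
  have hd3 : (0:ℝ) < M + (K + 1) - u := by linarith
  rcases eq_or_lt_of_le hd2 with he | hd2
  · -- degenerate denominator: u = M + K, forces u = K + 1 (as M ≥ 1, u ≤ K+1)
    have h2 : (u : ℝ) / (M + K - u) * ((K:ℝ) + 1 - u) * 0 = 0 := by ring
    have hMu : M + (K:ℝ) = u := by linarith
    have hM1 : M = 1 := by nlinarith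
    have hKu : ((K:ℝ) + 1 - u) = 0 := by linarith
    rw [hKu, zero_mul, add_zero]
    have hd3e : M + ((K:ℝ)+1) - (u:ℝ) = 1 := by linarith
    rw [show M + (K:ℝ) - ((u:ℝ)-1) = M + (K+1) - u by ring, hd3e, div_one, div_one]
    nlinarith
  · rw [mul_div_assoc', mul_div_assoc', mul_div_assoc',
      div_add_div _ _ (ne_of_gt hd1) (ne_of_gt hd2),
      div_le_div_iff₀ (by positivity) hd3]
    nlinarith [mul_nonneg (mul_nonneg hd3.le (by positivity : (0:ℝ) ≤ (u:ℝ))) (sub_nonneg.2 hM)]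

/-- pointwise comparison at terminal time -/
lemma realB1 {M : ℝ} (hM : 1 ≤ M) {n v : ℕ} (hn : 1 ≤ n) (hv : v ≤ n) :
    freal M n v ≤ (v : ℝ) / ((n : ℝ) + 1 - v) * ((n : ℝ) / (M + n - 1)) := by
  rcases Nat.eq_zero_or_pos v with rfl | hv0
  · simp [freal]
  have hv1 : (1:ℝ) ≤ v := by exact_mod_cast hv0
  have hvR : (v:ℝ) ≤ n := Nat.cast_le.2 hv
  have hnR : (1:ℝ) ≤ n := by exact_mod_cast hn
  have hd1 : (0:ℝ) < M + n - v := by linarith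
  have hd2 : (0:ℝ) < (n:ℝ) + 1 - v := by linarith
  have hd3 : (0:ℝ) < M + n - 1 := by linarith
  rw [freal, div_mul_div_comm, div_le_div_iff₀ hd1 (by positivity)]
  nlinarith [mul_nonneg (mul_nonneg (sub_nonneg.2 hM) (sub_nonneg.2 hv1)) (by positivity : (0:ℝ) ≤ (v:ℝ))]

/-- the binomial identity `E[V/(n+1-V)] = (q/ρ)(1-qⁿ)` -/
lemma realB2 {ρ : ℝ} (hρ0 : 0 < ρ) {n : ℕ} :
    ∑ v ∈ range (n+1), (n.choose v : ℝ) * (1-ρ)^v * ρ^(n-v) * ((v:ℝ) / ((n:ℝ) + 1 - v))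
      = (1-ρ)/ρ * (1 - (1-ρ)^n) := by
  set q : ℝ := 1 - ρ with hq
  rw [Finset.sum_range_succ']
  simp only [Nat.cast_zero, zero_div, mul_zero, add_zero]
  have hterm : ∀ v ∈ range n,
      (n.choose (v+1) : ℝ) * q^(v+1) * ρ^(n-(v+1)) * (((v+1:ℕ):ℝ) / ((n:ℝ) + 1 - ((v+1:ℕ):ℝ)))
        = q/ρ * ((n.choose v : ℝ) * q^v * ρ^(n-v)) := by
    intro v hv
    have hvn : v < n := mem_range.1 hv
    have hnum : (n.choose (v+1) : ℝ) * ((v:ℝ)+1) = (n.choose v : ℝ) * ((n:ℝ) - v) := by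
      have := Nat.choose_succ_right_eq n v
      have hc : ((n.choose (v+1) * (v+1) : ℕ) : ℝ) = ((n.choose v * (n - v) : ℕ) : ℝ) := by
        exact_mod_cast congrArg (Nat.cast (R := ℝ)) this
      push_cast [Nat.cast_sub hvn.le] at hc
      linarith
    have hpow : ρ^(n-v) = ρ^(n-(v+1)) * ρ := by
      have : n - v = (n - (v+1)) + 1 := by omega
      rw [this, pow_succ]
    have hden : (n:ℝ) + 1 - ((v+1:ℕ):ℝ) = (n:ℝ) - v := by push_cast; ring
    have hdpos : (0:ℝ) < (n:ℝ) - v := by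
      have : (v:ℝ) < n := by exact_mod_cast hvn
      linarith
    rw [hden, hpow]
    have hρne : ρ ≠ 0 := ne_of_gt hρ0
    have hdne : ((n:ℝ) - v) ≠ 0 := ne_of_gt hdpos
    push_cast
    have ha : ((n:ℝ) - v) * ((n:ℝ) - v)⁻¹ = 1 := mul_inv_cancel₀ hdne
    have hb : ρ * ρ⁻¹ = 1 := mul_inv_cancel₀ hρne
    linear_combination (q^(v+1) * ρ^(n-(v+1)) * ((n:ℝ) - v)⁻¹) * hnum
      + (q^(v+1) * ρ^(n-(v+1)) * (n.choose v : ℝ)) * ha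
      - (q^(v+1) * ρ^(n-(v+1)) * (n.choose v : ℝ)) * hb
  rw [Finset.sum_congr rfl hterm, ← Finset.mul_sum]
  congr 1
  have hbin : ∑ v ∈ range (n+1), q^v * ρ^(n-v) * (n.choose v : ℝ) = 1 := by
    rw [← add_pow]
    norm_num [hq]
  rw [Finset.sum_range_succ] at hbin
  simp only [Nat.choose_self, Nat.cast_one, Nat.sub_self, pow_zero, mul_one] at hbin
  have : ∑ v ∈ range n, (n.choose v : ℝ) * q^v * ρ^(n-v)
      = ∑ v ∈ range n, q^v * ρ^(n-v) * (n.choose v : ℝ) := by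
    apply Finset.sum_congr rfl; intro v _; ring
  rw [this]
  linarith

/-- the choice of M makes the terminal expectation at most one -/
lemma realB3 {ρ : ℝ} (hρ : ρ ∈ Set.Ioc (0:ℝ) 1) {n : ℕ} (hn : 1 ≤ n)
    {M : ℝ} (hMdef : M = max 1 (1 + (n : ℝ) * (1 - 2 * ρ - (1 - ρ) * ρ ^ n) / ρ)) :
    (1-ρ)/ρ * (1 - (1-ρ)^n) * ((n : ℝ) / (M + n - 1)) ≤ 1 := by
  obtain ⟨hρ0, hρ1⟩ := hρ
  set q : ℝ := 1 - ρ with hq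
  have hq0 : 0 ≤ q := by rw [hq]; linarith
  have hq1 : q < 1 := by rw [hq]; linarith
  have hqn : 0 ≤ q^n := by positivity
  have hqn1 : q^n ≤ 1 := pow_le_one₀ hq0 hq1.le
  have hnR : (1:ℝ) ≤ n := by exact_mod_cast hn
  have hM1 : 1 ≤ M := by rw [hMdef]; exact le_max_left _ _
  have hden : (0:ℝ) < M + n - 1 := by linarith
  -- suffices: n * q * (1 - q^n) ≤ ρ * (M + n - 1)
  have key : (n:ℝ) * q * (1 - q^n) ≤ ρ * (M + n - 1) := by
    rcases le_total ρ q with hle | hle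
    · -- ρ ≤ q, use second branch of max
      have hbr : 1 + (n : ℝ) * (1 - 2 * ρ - q * ρ ^ n) / ρ ≤ M := by
        rw [hMdef, hq]; exact le_max_right _ _
      have hρn : ρ^n ≤ q^n := pow_le_pow_left₀ hρ0.le hle n
      have h1 : (n:ℝ) * (1 - 2 * ρ - q * ρ ^ n) ≤ (M - 1) * ρ := by
        rw [← div_le_iff₀ hρ0]; linarith
      have h3 : (n:ℝ) * (1 - 2*ρ - q * ρ^n) + ρ * n = (n:ℝ) * (q - q * ρ^n) := by
        rw [hq]; ring
      have h4 : (n:ℝ) * q * (1 - q^n) ≤ (n:ℝ) * (q - q * ρ^n) := by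
        have h5 : q * ρ^n ≤ q * q^n := mul_le_mul_of_nonneg_left hρn hq0
        have h6 : q - q * q^n ≤ q - q * ρ^n := by linarith
        have h7 : (n:ℝ) * (q - q*q^n) ≤ (n:ℝ) * (q - q*ρ^n) :=
          mul_le_mul_of_nonneg_left h6 (by linarith)
        have h8 : (n:ℝ) * q * (1 - q^n) = (n:ℝ) * (q - q * q^n) := by ring
        linarith
      have h9 : ρ * (M + n - 1) = (M-1) * ρ + ρ * n := by ring
      linarith
    · -- q ≤ ρ : M ≥ 1 suffices
      have h1 : ρ * (M + n - 1) ≥ ρ * n := by nlinarith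
      have h4 : (n:ℝ) * q * (1 - q^n) ≤ (n:ℝ) * q := by
        nlinarith [mul_nonneg (mul_nonneg (le_of_lt (lt_of_lt_of_le zero_lt_one hnR)) hq0) hqn]
      have h5 : (n:ℝ) * q ≤ (n:ℝ) * ρ := by nlinarith
      have h6 : (n:ℝ) * ρ = ρ * n := by ring
      linarith
  have heq : q / ρ * (1 - q ^ n) * ((n:ℝ) / (M + (n:ℝ) - 1))
      = ((n:ℝ) * q * (1 - q^n)) / (ρ * (M + (n:ℝ) - 1)) := by
    field_simp
  rw [heq, div_le_one (mul_pos hρ0 hden)]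
  linarith [key]
open scoped ENNReal

lemma step_ineq {n K : ℕ} (hK1 : K + 1 ≤ n) {Mr : ℝ} (hM : 1 ≤ Mr)
    (m' : (Fin n → Bool) → ℝ≥0∞)
    (hinv : ∀ x y : Fin n → Bool,
      (∀ j, K + 1 ≤ j → j ≤ n → bcount n x j = bcount n y j) → m' x = m' y) :
    ∑ x : Fin n → Bool, ENNReal.ofReal (freal Mr K (bcount n x K)) * m' x
      ≤ ∑ x : Fin n → Bool, ENNReal.ofReal (freal Mr (K + 1) (bcount n x (K + 1))) * m' x := by
  classical
  have hKn : K < n := hK1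
  set κ : Fin n := ⟨K, hKn⟩ with hκ
  set s : Finset (Fin n) := Finset.univ.filter (fun i : Fin n => (i : ℕ) < K + 1) with hs
  have hscard : s.card = K + 1 := card_filter_lt hK1
  have hmem : ∀ i ∈ s, (i : ℕ) < K + 1 := by
    intro i hi; rw [hs] at hi; exact (Finset.mem_filter.1 hi).2
  have hκs : (κ : ℕ) < K + 1 := Nat.lt_succ_self K
  -- invariance of m' under the swaps
  have hminv : ∀ i ∈ s, ∀ x : Fin n → Bool, m' (x ∘ (Equiv.swap i κ)) = m' x := by
    intro i hi x
    apply hinv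
    intro j hj1 hj2
    exact bcount_perm x _ (swap_val_lt i κ (lt_of_lt_of_le (hmem i hi) hj1)
      (lt_of_lt_of_le hκs hj1))
  -- bcount relation under the swaps
  have hb : ∀ i ∈ s, ∀ x : Fin n → Bool,
      bcount n (x ∘ (Equiv.swap i κ)) K + (if x i = true then 1 else 0)
        = bcount n x (K + 1) := by
    intro i hi x
    have h1 : bcount n (x ∘ (Equiv.swap i κ)) (K + 1) = bcount n x (K + 1) :=
      bcount_perm x _ (swap_val_lt i κ (hmem i hi) hκs)
    have h2 := bcount_succ (x ∘ (Equiv.swap i κ)) hKn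
    have h3 : (x ∘ (Equiv.swap i κ)) ⟨K, hKn⟩ = x i := by
      have : (⟨K, hKn⟩ : Fin n) = κ := rfl
      rw [this]
      simp [Function.comp, Equiv.swap_apply_right]
    rw [h3] at h2
    rw [← h1, h2]
  -- swap change of variables
  have hswap : ∀ i ∈ s,
      ∑ x : Fin n → Bool, ENNReal.ofReal (freal Mr K (bcount n x K)) * m' x
        = ∑ x : Fin n → Bool,
            ENNReal.ofReal (freal Mr K (bcount n (x ∘ (Equiv.swap i κ)) K)) * m' x := by
    intro i hi
    have hinvol : Function.Involutive (fun x : Fin n → Bool => x ∘ (Equiv.swap i κ)) := by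
      intro x; funext j
      simp [Function.comp, Equiv.swap_apply_self]
    refine Fintype.sum_bijective _ hinvol.bijective _ _ ?_
    intro x
    have h1 : (x ∘ ⇑(Equiv.swap i κ)) ∘ ⇑(Equiv.swap i κ) = x := hinvol x
    rw [hminv i hi x]
    rw [show ((x ∘ ⇑(Equiv.swap i κ)) ∘ ⇑(Equiv.swap i κ)) = x from h1]
  -- per-x inequality
  have hperx : ∀ x : Fin n → Bool,
      ∑ i ∈ s, ENNReal.ofReal (freal Mr K (bcount n (x ∘ (Equiv.swap i κ)) K))
        ≤ (K + 1 : ℝ≥0∞) * ENNReal.ofReal (freal Mr (K + 1) (bcount n x (K + 1))) := by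
    intro x
    set u : ℕ := bcount n x (K + 1) with hu
    have huK : u ≤ K + 1 := bcount_le n x (K + 1)
    have hcongr : ∀ i ∈ s,
        ENNReal.ofReal (freal Mr K (bcount n (x ∘ (Equiv.swap i κ)) K))
          = if x i = true then ENNReal.ofReal (freal Mr K (u - 1))
            else ENNReal.ofReal (freal Mr K u) := by
      intro i hi
      have h := hb i hi x
      by_cases hx : x i = true
      · rw [if_pos hx] at h
        rw [if_pos hx]
        have he : bcount n (x ∘ ⇑(Equiv.swap i κ)) K = u - 1 := by omega
        rw [he]
      · rw [if_neg hx] at h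
        rw [if_neg hx]
        have he : bcount n (x ∘ ⇑(Equiv.swap i κ)) K = u := by omega
        rw [he]
    rw [Finset.sum_congr rfl hcongr, Finset.sum_ite]
    have hcard1 : (s.filter (fun i => x i = true)).card = u := by
      rw [hs, bcount_filter_eq]
    have hcard2 : (s.filter (fun i => ¬ x i = true)).card = K + 1 - u := by
      rw [Finset.filter_not, Finset.card_sdiff_of_subset (Finset.filter_subset _ _), hscard, hcard1]
    rw [Finset.sum_const, Finset.sum_const, hcard1, hcard2]
    have e3 : (K + 1 : ℝ≥0∞) * ENNReal.ofReal (freal Mr (K + 1) u)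
        = ENNReal.ofReal (((K : ℝ) + 1) * freal Mr (K + 1) u) := by
      rw [ENNReal.ofReal_mul (by positivity)]
      congr 1
      rw [ENNReal.ofReal_add (by positivity) zero_le_one]
      norm_num [ENNReal.ofReal_natCast]
    rw [nsmul_eq_mul, nsmul_eq_mul, ← ENNReal.ofReal_natCast u,
      ← ENNReal.ofReal_natCast (K + 1 - u)]
    rw [← ENNReal.ofReal_mul (by positivity), ← ENNReal.ofReal_mul (by positivity),
      ← ENNReal.ofReal_add, e3]
    · exact ENNReal.ofReal_le_ofReal (realA hM K u huK)
    · exact mul_nonneg (by positivity) (freal_nonneg hM (by omega))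
    · exact mul_nonneg (by positivity) (freal_nonneg hM (by omega))
  -- put it together
  have main : (K + 1 : ℝ≥0∞) * (∑ x : Fin n → Bool,
        ENNReal.ofReal (freal Mr K (bcount n x K)) * m' x)
      ≤ (K + 1 : ℝ≥0∞) * ∑ x : Fin n → Bool,
        ENNReal.ofReal (freal Mr (K + 1) (bcount n x (K + 1))) * m' x := by
    calc (K + 1 : ℝ≥0∞) * ∑ x : Fin n → Bool, ENNReal.ofReal (freal Mr K (bcount n x K)) * m' x
        = ∑ _i ∈ s, ∑ x : Fin n → Bool, ENNReal.ofReal (freal Mr K (bcount n x K)) * m' x := by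
          rw [Finset.sum_const, hscard, nsmul_eq_mul]
          push_cast
          ring
      _ = ∑ i ∈ s, ∑ x : Fin n → Bool,
            ENNReal.ofReal (freal Mr K (bcount n (x ∘ ⇑(Equiv.swap i κ)) K)) * m' x :=
          Finset.sum_congr rfl hswap
      _ = ∑ x : Fin n → Bool, ∑ i ∈ s,
            ENNReal.ofReal (freal Mr K (bcount n (x ∘ ⇑(Equiv.swap i κ)) K)) * m' x :=
          Finset.sum_comm
      _ = ∑ x : Fin n → Bool,
            (∑ i ∈ s, ENNReal.ofReal (freal Mr K (bcount n (x ∘ ⇑(Equiv.swap i κ)) K))) * m' x := by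
          refine Finset.sum_congr rfl fun x _ => ?_
          rw [Finset.sum_mul]
      _ ≤ ∑ x : Fin n → Bool,
            ((K + 1 : ℝ≥0∞) * ENNReal.ofReal (freal Mr (K + 1) (bcount n x (K + 1)))) * m' x := by
          refine Finset.sum_le_sum fun x _ => ?_
          exact mul_le_mul_left (hperx x) _
      _ = (K + 1 : ℝ≥0∞) * ∑ x : Fin n → Bool,
            ENNReal.ofReal (freal Mr (K + 1) (bcount n x (K + 1))) * m' x := by
          rw [Finset.mul_sum]
          refine Finset.sum_congr rfl fun x _ => ?_
          ring
  have h0 : (K + 1 : ℝ≥0∞) ≠ 0 := by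
    simp
  have htop : (K + 1 : ℝ≥0∞) ≠ ⊤ := by
    simp [ENNReal.add_eq_top]
  exact (ENNReal.mul_le_mul_iff_right h0 htop).1 main


lemma card_bcount_fiber {n v : ℕ} :
    ((Finset.univ : Finset (Fin n → Bool)).filter (fun x => bcount n x n = v)).card
      = n.choose v := by
  classical
  have key : ((Finset.univ : Finset (Fin n → Bool)).filter (fun x => bcount n x n = v)).card
      = (Finset.powersetCard v (Finset.univ : Finset (Fin n))).card := by
    apply Finset.card_nbij (fun x => Finset.univ.filter (fun j : Fin n => x j = true))
    · intro x hx
      simp only [Finset.mem_coe, Finset.mem_filter, Finset.mem_univ, true_and] at hx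
      rw [Finset.mem_coe, Finset.mem_powersetCard]
      refine ⟨Finset.filter_subset _ _ |>.trans (Finset.subset_univ _), ?_⟩
      rw [← hx]
      unfold bcount
      congr 1
      apply Finset.filter_congr
      intro j _
      simp [j.isLt]
    · intro x _ y _ hxy
      funext j
      have hxy' : Finset.univ.filter (fun j : Fin n => x j = true)
          = Finset.univ.filter (fun j : Fin n => y j = true) := hxy
      have hj : (j ∈ Finset.univ.filter (fun j : Fin n => x j = true))
          ↔ (j ∈ Finset.univ.filter (fun j : Fin n => y j = true)) := by rw [hxy']
      simp only [Finset.mem_filter, Finset.mem_univ, true_and] at hj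
      cases hx : x j <;> cases hy : y j <;> simp_all
    · intro t ht
      rw [Finset.mem_coe, Finset.mem_powersetCard] at ht
      refine ⟨fun j => decide (j ∈ t), ?_, ?_⟩
      · simp only [Finset.coe_filter, Set.mem_setOf_eq, Finset.mem_univ, true_and]
        unfold bcount
        rw [← ht.2]
        congr 1
        ext j
        simp [j.isLt]
      · ext j
        simp
  rw [key, Finset.card_powersetCard, Finset.card_univ, Fintype.card_fin]

lemma sum_bcount_fiber {n : ℕ} (g : ℕ → ℝ) :
    ∑ x : Fin n → Bool, g (bcount n x n)
      = ∑ v ∈ Finset.range (n + 1), (n.choose v : ℝ) * g v := by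
  classical
  rw [Finset.sum_comp g (fun x : Fin n → Bool => bcount n x n)]
  have himg : Finset.image (fun x : Fin n → Bool => bcount n x n) Finset.univ
      ⊆ Finset.range (n + 1) := by
    intro v hv
    obtain ⟨x, _, rfl⟩ := Finset.mem_image.1 hv
    exact Finset.mem_range.2 (Nat.lt_succ_of_le (bcount_le n x n))
  have hzero : ∀ v ∈ Finset.range (n + 1),
      v ∉ Finset.image (fun x : Fin n → Bool => bcount n x n) Finset.univ →
      (Finset.univ.filter (fun x : Fin n → Bool => bcount n x n = v)).card • g v = 0 := by
    intro v _ hv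
    have : (Finset.univ.filter (fun x : Fin n → Bool => bcount n x n = v)) = ∅ := by
      rw [Finset.eq_empty_iff_forall_notMem]
      intro x hx
      rw [Finset.mem_filter] at hx
      exact hv (Finset.mem_image.2 ⟨x, Finset.mem_univ _, hx.2⟩)
    rw [this]
    simp
  rw [Finset.sum_subset himg hzero]
  apply Finset.sum_congr rfl
  intro v _
  rw [card_bcount_fiber, nsmul_eq_mul]

/-- terminal bound: `E[V_n/(M + n - V_n)] ≤ 1` for the binomial weights -/
lemma final_bound {n : ℕ} (hn : 1 ≤ n) {ρ : ℝ} (hρ : ρ ∈ Set.Ioc (0 : ℝ) 1)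
    {Mr : ℝ} (hMdef : Mr = max 1 (1 + (n : ℝ) * (1 - 2 * ρ - (1 - ρ) * ρ ^ n) / ρ)) :
    ∑ x : Fin n → Bool,
        ENNReal.ofReal (freal Mr n (bcount n x n)) *
          ENNReal.ofReal ((1 - ρ) ^ (bcount n x n) * ρ ^ (n - bcount n x n)) ≤ 1 := by
  classical
  obtain ⟨hρ0, hρ1⟩ := hρ
  have hM1 : 1 ≤ Mr := by rw [hMdef]; exact le_max_left _ _
  set g : ℕ → ℝ := fun v => freal Mr n v * ((1 - ρ) ^ v * ρ ^ (n - v)) with hg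
  have hgnn : ∀ v, v ≤ n → 0 ≤ g v := by
    intro v hv
    apply mul_nonneg (freal_nonneg hM1 (by omega))
    exact mul_nonneg (pow_nonneg (by linarith) v) (pow_nonneg hρ0.le (n - v))
  have hterm : ∀ x : Fin n → Bool,
      ENNReal.ofReal (freal Mr n (bcount n x n)) *
        ENNReal.ofReal ((1 - ρ) ^ (bcount n x n) * ρ ^ (n - bcount n x n))
        = ENNReal.ofReal (g (bcount n x n)) := by
    intro x
    rw [hg, ENNReal.ofReal_mul (freal_nonneg hM1 (by have := bcount_le n x n; omega))]
  rw [Finset.sum_congr rfl (fun x _ => hterm x), ← ENNReal.ofReal_sum_of_nonneg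
    (fun x _ => hgnn _ (bcount_le n x n))]
  rw [ENNReal.ofReal_le_one]
  rw [sum_bcount_fiber g]
  -- now the real-valued binomial bound
  have hbd : ∀ v ∈ Finset.range (n + 1),
      (n.choose v : ℝ) * g v
        ≤ ((n.choose v : ℝ) * (1 - ρ)^v * ρ^(n-v) * ((v : ℝ) / ((n : ℝ) + 1 - v)))
            * ((n : ℝ) / (Mr + n - 1)) := by
    intro v hv
    have hvn : v ≤ n := Nat.lt_succ_iff.1 (Finset.mem_range.1 hv)
    have h1 := realB1 hM1 hn hvn
    have hc : (0 : ℝ) ≤ (n.choose v : ℝ) * ((1 - ρ)^v * ρ^(n-v)) :=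
      mul_nonneg (Nat.cast_nonneg _)
        (mul_nonneg (pow_nonneg (by linarith) v) (pow_nonneg hρ0.le (n - v)))
    calc (n.choose v : ℝ) * g v
        = ((n.choose v : ℝ) * ((1 - ρ)^v * ρ^(n-v))) * freal Mr n v := by rw [hg]; ring
      _ ≤ ((n.choose v : ℝ) * ((1 - ρ)^v * ρ^(n-v)))
            * ((v : ℝ) / ((n : ℝ) + 1 - v) * ((n : ℝ) / (Mr + n - 1))) :=
          mul_le_mul_of_nonneg_left h1 hc
      _ = ((n.choose v : ℝ) * (1 - ρ)^v * ρ^(n-v) * ((v : ℝ) / ((n : ℝ) + 1 - v)))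
            * ((n : ℝ) / (Mr + n - 1)) := by ring
  calc ∑ v ∈ Finset.range (n + 1), (n.choose v : ℝ) * g v
      ≤ ∑ v ∈ Finset.range (n + 1),
          ((n.choose v : ℝ) * (1 - ρ)^v * ρ^(n-v) * ((v : ℝ) / ((n : ℝ) + 1 - v)))
            * ((n : ℝ) / (Mr + n - 1)) := Finset.sum_le_sum hbd
    _ = (∑ v ∈ Finset.range (n + 1),
          (n.choose v : ℝ) * (1 - ρ)^v * ρ^(n-v) * ((v : ℝ) / ((n : ℝ) + 1 - v)))
            * ((n : ℝ) / (Mr + n - 1)) := by rw [← Finset.sum_mul]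
    _ = (1 - ρ)/ρ * (1 - (1 - ρ)^n) * ((n : ℝ) / (Mr + n - 1)) := by rw [realB2 hρ0]
    _ ≤ 1 := realB3 ⟨hρ0, hρ1⟩ hn hMdef

/-- `V_k = Σ_{j=1}^k ξ_j`: the number of successes among the first `k` of the `ξ_j`. -/
def Vcount {Ω : Type*} {n : ℕ} (ξ : Fin n → Ω → Bool) (k : ℕ) (ω : Ω) : ℕ :=
  (Finset.univ.filter (fun j : Fin n => (j : ℕ) < k ∧ ξ j ω = true)).card

/-- The reverse filtration `G_k = σ(V_j : k ≤ j ≤ n)`. -/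
def revFilt {Ω : Type*} [MeasurableSpace Ω] {n : ℕ} (ξ : Fin n → Ω → Bool) (k : ℕ) :
    MeasurableSpace Ω :=
  ⨆ j ∈ Finset.Icc k n, MeasurableSpace.comap (fun ω => Vcount ξ j ω) inferInstance


section RevFilt

variable {Ω : Type*} [MeasurableSpace Ω] {n : ℕ} (ξ : Fin n → Ω → Bool)

/-- sets measurable for the reverse filtration are invariant under outcomes with the
same values of `V_j`, `k ≤ j ≤ n`. -/
lemma revFilt_invariant {k : ℕ} {s : Set Ω} (hs : MeasurableSet[revFilt ξ k] s)
    {ω ω' : Ω} (h : ∀ j ∈ Finset.Icc k n, Vcount ξ j ω = Vcount ξ j ω') :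
    ω ∈ s ↔ ω' ∈ s := by
  classical
  let m : MeasurableSpace Ω :=
    { MeasurableSet' := fun t => ∀ ω₁ ω₂ : Ω,
        (∀ j ∈ Finset.Icc k n, Vcount ξ j ω₁ = Vcount ξ j ω₂) → (ω₁ ∈ t ↔ ω₂ ∈ t)
      measurableSet_empty := fun _ _ _ => Iff.rfl
      measurableSet_compl := fun t ht ω₁ ω₂ hV => by
        simp only [Set.mem_compl_iff]
        exact not_congr (ht ω₁ ω₂ hV)
      measurableSet_iUnion := fun f hf ω₁ ω₂ hV => by
        simp only [Set.mem_iUnion]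
        exact exists_congr fun i => hf i ω₁ ω₂ hV }
  have hle : revFilt ξ k ≤ m := by
    refine iSup₂_le fun j hj => ?_
    intro t ht
    obtain ⟨u, -, rfl⟩ := ht
    intro ω₁ ω₂ hV
    simp only [Set.mem_preimage]
    rw [hV j hj]
  exact hle s hs ω ω' h

lemma measurable_vcount (hmeas : ∀ i, Measurable (ξ i)) (j : ℕ) :
    Measurable (Vcount ξ j) := by
  have hrw : Vcount ξ j = fun ω =>
      ∑ i : Fin n, if ((i : ℕ) < j ∧ ξ i ω = true) then 1 else 0 := by
    funext ω
    exact Finset.card_filter _ _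
  rw [hrw]
  apply Finset.measurable_sum
  intro i _
  by_cases hij : (i : ℕ) < j
  · simp only [hij, true_and]
    exact Measurable.ite (hmeas i (measurableSet_singleton true)) measurable_const
      measurable_const
  · simp only [hij, false_and, if_false]
    exact measurable_const

lemma revFilt_le (hmeas : ∀ i, Measurable (ξ i)) (k : ℕ) :
    revFilt ξ k ≤ ‹MeasurableSpace Ω› :=
  iSup₂_le fun j _ => (measurable_vcount ξ hmeas j).comap_le

end RevFilt

/-- optional-stopping bound. For i.i.d. Bernoulli(1 − ρ) variables,
`M = max(1, 1 + n·(1 − 2ρ − (1 − ρ)·ρⁿ)/ρ)`, and any reverse stopping time `T` with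
values in `{1, …, n}`, we have `E[V_T/(M + T − V_T)] ≤ 1`. -/
theorem stmt15 {Ω : Type*} [MeasurableSpace Ω] (P : Measure Ω) [IsProbabilityMeasure P]
    (n : ℕ) (hn : 1 ≤ n) (ρ : ℝ) (hρ : ρ ∈ Set.Ioc (0 : ℝ) 1)
    (ξ : Fin n → Ω → Bool) (hmeas : ∀ i, Measurable (ξ i))
    (hindep : iIndepFun ξ P)
    (hbern : ∀ i, P {ω | ξ i ω = true} = ENNReal.ofReal (1 - ρ))
    (T : Ω → ℕ) (hTval : ∀ ω, T ω ∈ Finset.Icc 1 n)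
    (hTstop : ∀ k, MeasurableSet[revFilt ξ k] {ω | T ω = k}) :
    ∫⁻ ω, ENNReal.ofReal
        ((Vcount ξ (T ω) ω : ℝ) /
          (max 1 (1 + (n : ℝ) * (1 - 2 * ρ - (1 - ρ) * ρ ^ n) / ρ) +
            T ω - Vcount ξ (T ω) ω)) ∂P
      ≤ 1 := by
  classical
  obtain ⟨hρ0, hρ1⟩ := hρ
  set Mr : ℝ := max 1 (1 + (n : ℝ) * (1 - 2 * ρ - (1 - ρ) * ρ ^ n) / ρ) with hMdef
  have hM1 : 1 ≤ Mr := le_max_left _ _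
  set F : ℕ → ℕ → ℝ≥0∞ := fun k v => ENNReal.ofReal (freal Mr k v) with hF
  set A : (Fin n → Bool) → Set Ω := fun x => {ω | ∀ i, ξ i ω = x i} with hA
  have hAmeas : ∀ x, MeasurableSet (A x) := by
    intro x
    have : A x = ⋂ i, (ξ i) ⁻¹' ({x i} : Set Bool) := by
      ext ω
      simp only [hA, Set.mem_setOf_eq, Set.mem_iInter, Set.mem_preimage,
        Set.mem_singleton_iff]
    rw [this]
    exact MeasurableSet.iInter fun i => hmeas i (measurableSet_singleton _)
  have hTmeas : ∀ k, MeasurableSet {ω | T ω = k} :=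
    fun k => revFilt_le ξ hmeas k _ (hTstop k)
  -- the atom probabilities
  have hVb : ∀ (k : ℕ) (ω : Ω), Vcount ξ k ω = bcount n (fun i => ξ i ω) k := fun _ _ => rfl
  have hVx : ∀ (x : Fin n → Bool) (ω : Ω), ω ∈ A x → ∀ j, Vcount ξ j ω = bcount n x j := by
    intro x ω hω j
    unfold Vcount bcount
    congr 1
    apply Finset.filter_congr
    intro i _
    rw [hω i]
  have hPA : ∀ x : Fin n → Bool,
      P (A x) = ENNReal.ofReal ((1 - ρ) ^ (bcount n x n) * ρ ^ (n - bcount n x n)) := by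
    intro x
    have hAset : A x = ⋂ i ∈ Finset.univ, (ξ i) ⁻¹' ({x i} : Set Bool) := by
      ext ω
      simp only [hA, Set.mem_setOf_eq, Set.mem_iInter, Set.mem_preimage,
        Set.mem_singleton_iff, Finset.mem_univ, true_implies]
    have hprod := (iIndepFun_iff_measure_inter_preimage_eq_mul.1 hindep) Finset.univ
      (sets := fun i => ({x i} : Set Bool)) (fun i _ => measurableSet_singleton _)
    rw [hAset, hprod]
    have hfac : ∀ i : Fin n, P ((ξ i) ⁻¹' ({x i} : Set Bool))
        = if x i = true then ENNReal.ofReal (1 - ρ) else ENNReal.ofReal ρ := by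
      intro i
      have htrue : (ξ i) ⁻¹' ({true} : Set Bool) = {ω | ξ i ω = true} := by
        ext ω; simp
      cases hxi : x i
      · rw [if_neg (by simp)]
        have hfalse : (ξ i) ⁻¹' ({false} : Set Bool) = ({ω | ξ i ω = true})ᶜ := by
          ext ω
          simp
        have hms : MeasurableSet {ω | ξ i ω = true} := by
          rw [← htrue]
          exact hmeas i (measurableSet_singleton true)
        rw [hfalse, prob_compl_eq_one_sub hms, hbern i]
        have hsum : ENNReal.ofReal (1 - ρ) + ENNReal.ofReal ρ = 1 := by
          rw [← ENNReal.ofReal_add (by linarith) hρ0.le]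
          norm_num
        rw [← hsum, ENNReal.add_sub_cancel_left ENNReal.ofReal_ne_top]
      · rw [if_pos rfl, htrue, hbern i]
    rw [Finset.prod_congr rfl (fun i _ => hfac i), Finset.prod_ite, Finset.prod_const,
      Finset.prod_const]
    have hc1 : (Finset.univ.filter fun i : Fin n => x i = true).card = bcount n x n := by
      unfold bcount
      congr 1
      apply Finset.filter_congr
      intro j _
      simp [j.isLt]
    have hc2 : (Finset.univ.filter fun i : Fin n => ¬ x i = true).card = n - bcount n x n := by
      rw [Finset.filter_not, Finset.card_sdiff_of_subset (Finset.filter_subset _ _), hc1,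
        Finset.card_univ, Fintype.card_fin]
    rw [hc1, hc2, ← ENNReal.ofReal_pow (by linarith), ← ENNReal.ofReal_pow hρ0.le,
      ← ENNReal.ofReal_mul (pow_nonneg (by linarith) _)]
  -- step I : write the integral as a finite sum over atoms
  set mk : ℕ → (Fin n → Bool) → ℝ≥0∞ := fun k x => P (A x ∩ {ω | T ω = k}) with hmk
  have hAkmeas : ∀ (k : ℕ) (x : Fin n → Bool), MeasurableSet (A x ∩ {ω | T ω = k}) :=
    fun k x => (hAmeas x).inter (hTmeas k)
  have hdecomp : (fun ω => ENNReal.ofReal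
        ((Vcount ξ (T ω) ω : ℝ) / (Mr + T ω - Vcount ξ (T ω) ω)))
      = fun ω => ∑ k ∈ Finset.Icc 1 n, ∑ x : Fin n → Bool,
          (A x ∩ {ω' | T ω' = k}).indicator (fun _ => F k (bcount n x k)) ω := by
    funext ω
    rw [eq_comm]
    rw [Finset.sum_eq_single (T ω)]
    · rw [Fintype.sum_eq_single (fun i => ξ i ω)]
      · have hmem : ω ∈ (A fun i => ξ i ω) ∩ {ω' | T ω' = T ω} := ⟨fun i => rfl, rfl⟩
        rw [Set.indicator_of_mem hmem]
        rw [hF, ← hVb]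
        rfl
      · intro x hx
        apply Set.indicator_of_notMem
        rintro ⟨h1, -⟩
        apply hx
        funext i
        exact (h1 i).symm
    · intro k _ hk
      apply Finset.sum_eq_zero
      intro x _
      apply Set.indicator_of_notMem
      rintro ⟨-, h2⟩
      exact hk (h2.symm)
    · intro h
      exact absurd (hTval ω) h
  rw [hdecomp]
  rw [MeasureTheory.lintegral_finset_sum _ (fun k _ => Finset.measurable_sum _
    (fun x _ => measurable_const.indicator (hAkmeas k x)))]
  have hlin : ∀ k ∈ Finset.Icc 1 n,
      (∫⁻ ω, ∑ x : Fin n → Bool,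
        (A x ∩ {ω' | T ω' = k}).indicator (fun _ => F k (bcount n x k)) ω ∂P)
      = ∑ x : Fin n → Bool, F k (bcount n x k) * mk k x := by
    intro k _
    rw [MeasureTheory.lintegral_finset_sum _
      (fun x _ => measurable_const.indicator (hAkmeas k x))]
    exact Finset.sum_congr rfl fun x _ =>
      MeasureTheory.lintegral_indicator_const (hAkmeas k x) _
  rw [Finset.sum_congr rfl hlin]
  -- step II : the backward-induction process
  set B : ℕ → ℝ≥0∞ := fun K => ∑ k ∈ Finset.Icc 1 n, ∑ x : Fin n → Bool,
      F (max k K) (bcount n x (max k K)) * mk k x with hB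
  have hB1 : B 1 = ∑ k ∈ Finset.Icc 1 n, ∑ x : Fin n → Bool,
      F k (bcount n x k) * mk k x := by
    rw [hB]
    refine Finset.sum_congr rfl fun k hk => ?_
    have h1 : max k 1 = k := max_eq_left (Finset.mem_Icc.1 hk).1
    rw [h1]
  -- invariance of the stopped masses
  have hDinv : ∀ (K : ℕ) (ω₂ ω₃ : Ω),
      (∀ j, K + 1 ≤ j → j ≤ n → Vcount ξ j ω₂ = Vcount ξ j ω₃) →
      (T ω₂ ≤ K ↔ T ω₃ ≤ K) := by
    intro K ω₂ ω₃ hV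
    have hTj : ∀ j, K + 1 ≤ j → j ≤ n → (T ω₂ = j ↔ T ω₃ = j) := by
      intro j h1 h2
      apply revFilt_invariant ξ (hTstop j)
      intro j' hj'
      obtain ⟨hj1, hj2⟩ := Finset.mem_Icc.1 hj'
      exact hV j' (le_trans h1 hj1) hj2
    constructor
    · intro h
      by_contra hc
      push_neg at hc
      have h2 := (Finset.mem_Icc.1 (hTval ω₃)).2
      have := (hTj (T ω₃) hc h2).2 rfl
      omega
    · intro h
      by_contra hc
      push_neg at hc
      have h2 := (Finset.mem_Icc.1 (hTval ω₂)).2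
      have := (hTj (T ω₂) hc h2).1 rfl
      omega
  -- the key inductive step
  have hstep : ∀ K, 1 ≤ K → K < n → B K ≤ B (K + 1) := by
    intro K hK1 hKn
    simp only [hB]
    rw [← Finset.sum_filter_add_sum_filter_not (Finset.Icc 1 n) (· ≤ K),
      ← Finset.sum_filter_add_sum_filter_not (Finset.Icc 1 n) (· ≤ K)]
    have heq2 : ∑ k ∈ (Finset.Icc 1 n).filter (fun k => ¬ k ≤ K),
        ∑ x : Fin n → Bool, F (max k K) (bcount n x (max k K)) * mk k x
        = ∑ k ∈ (Finset.Icc 1 n).filter (fun k => ¬ k ≤ K),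
        ∑ x : Fin n → Bool, F (max k (K+1)) (bcount n x (max k (K+1))) * mk k x := by
      refine Finset.sum_congr rfl fun k hk => ?_
      have hkK : K + 1 ≤ k := by
        have := (Finset.mem_filter.1 hk).2
        omega
      have e1 : max k K = k := max_eq_left (by omega)
      have e2 : max k (K + 1) = k := max_eq_left (by omega)
      rw [e1, e2]
    rw [heq2]
    apply add_le_add_left
    have hL : ∑ k ∈ (Finset.Icc 1 n).filter (· ≤ K), ∑ x : Fin n → Bool,
          F (max k K) (bcount n x (max k K)) * mk k x
        = ∑ k ∈ (Finset.Icc 1 n).filter (· ≤ K), ∑ x : Fin n → Bool,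
          F K (bcount n x K) * mk k x := by
      refine Finset.sum_congr rfl fun k hk => ?_
      rw [max_eq_right (Finset.mem_filter.1 hk).2]
    have hR : ∑ k ∈ (Finset.Icc 1 n).filter (· ≤ K), ∑ x : Fin n → Bool,
          F (max k (K + 1)) (bcount n x (max k (K + 1))) * mk k x
        = ∑ k ∈ (Finset.Icc 1 n).filter (· ≤ K), ∑ x : Fin n → Bool,
          F (K + 1) (bcount n x (K + 1)) * mk k x := by
      refine Finset.sum_congr rfl fun k hk => ?_
      rw [max_eq_right (le_trans (Finset.mem_filter.1 hk).2 (Nat.le_succ K))]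
    rw [hL, hR]
    rw [Finset.sum_comm, Finset.sum_comm (s := (Finset.Icc 1 n).filter (· ≤ K))]
    have hpull : ∀ (j : ℕ), ∑ x : Fin n → Bool, ∑ k ∈ (Finset.Icc 1 n).filter (· ≤ K),
        F j (bcount n x j) * mk k x
        = ∑ x : Fin n → Bool, F j (bcount n x j)
            * ∑ k ∈ (Finset.Icc 1 n).filter (· ≤ K), mk k x := by
      intro j
      exact Finset.sum_congr rfl fun x _ => (Finset.mul_sum _ _ _).symm
    rw [hpull, hpull]
    set m' : (Fin n → Bool) → ℝ≥0∞ :=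
      fun x => ∑ k ∈ (Finset.Icc 1 n).filter (· ≤ K), mk k x with hm'
    -- identify m' with the mass of A x ∩ {T ≤ K}
    have hm'eq : ∀ x, m' x = P (A x ∩ {ω | T ω ≤ K}) := by
      intro x
      have hun : A x ∩ {ω | T ω ≤ K}
          = ⋃ k ∈ (Finset.Icc 1 n).filter (· ≤ K), (A x ∩ {ω | T ω = k}) := by
        ext ω
        simp only [Set.mem_inter_iff, Set.mem_setOf_eq, Set.mem_iUnion, Finset.mem_filter]
        constructor
        · rintro ⟨h1, h2⟩
          exact ⟨T ω, ⟨hTval ω, h2⟩, h1, rfl⟩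
        · rintro ⟨k, ⟨-, hk2⟩, h1, h2⟩
          exact ⟨h1, by omega⟩
      rw [hm', hun, measure_biUnion_finset ?hdisj (fun k _ => hAkmeas k x)]
      case hdisj =>
        intro k1 h1 k2 h2 hne
        apply Set.disjoint_left.2
        rintro ω ⟨-, hω1⟩ ⟨-, hω2⟩
        exact hne (by rw [← hω1, ← hω2])
    -- invariance hypothesis for step_ineq
    have hinv : ∀ x y : Fin n → Bool,
        (∀ j, K + 1 ≤ j → j ≤ n → bcount n x j = bcount n y j) → m' x = m' y := by
      intro x y hbc
      rw [hm'eq x, hm'eq y]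
      have hwxy : P (A x) = P (A y) := by
        rw [hPA x, hPA y, hbc n (by omega) le_rfl]
      rcases eq_or_ne (P (A x)) 0 with h0 | h0
      · have e1 : P (A x ∩ {ω | T ω ≤ K}) = 0 :=
          le_antisymm (le_trans (measure_mono Set.inter_subset_left) h0.le) zero_le
        have e2 : P (A y ∩ {ω | T ω ≤ K}) = 0 :=
          le_antisymm (le_trans (measure_mono Set.inter_subset_left) (hwxy ▸ h0).le)
            zero_le
        rw [e1, e2]
      · have hxne : (A x).Nonempty := by
          rw [Set.nonempty_iff_ne_empty]
          intro he
          rw [he, measure_empty] at h0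
          exact h0 rfl
        have hyne : (A y).Nonempty := by
          rw [Set.nonempty_iff_ne_empty]
          intro he
          rw [hwxy, he, measure_empty] at h0
          exact h0 rfl
        obtain ⟨ω, hω⟩ := hxne
        obtain ⟨ω', hω'⟩ := hyne
        -- atoms are contained in or disjoint from the stopping event
        have hconst : ∀ (z : Fin n → Bool) (ω₀ : Ω), ω₀ ∈ A z →
            A z ∩ {ω₁ | T ω₁ ≤ K} = if T ω₀ ≤ K then A z else (∅ : Set Ω) := by
          intro z ω₀ hω₀
          by_cases hD : T ω₀ ≤ K
          · rw [if_pos hD]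
            apply Set.eq_of_subset_of_subset Set.inter_subset_left
            intro ω₁ hω₁
            refine ⟨hω₁, ?_⟩
            have : T ω₁ ≤ K ↔ T ω₀ ≤ K := by
              apply hDinv K
              intro j _ _
              rw [hVx z ω₁ hω₁ j, hVx z ω₀ hω₀ j]
            exact this.2 hD
          · rw [if_neg hD]
            rw [Set.eq_empty_iff_forall_notMem]
            rintro ω₁ ⟨h1, h2⟩
            apply hD
            have : T ω₁ ≤ K ↔ T ω₀ ≤ K := by
              apply hDinv K
              intro j _ _
              rw [hVx z ω₁ h1 j, hVx z ω₀ hω₀ j]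
            exact this.1 h2
        have hTsame : T ω ≤ K ↔ T ω' ≤ K := by
          apply hDinv K
          intro j hj1 hj2
          rw [hVx x ω hω j, hVx y ω' hω' j, hbc j hj1 hj2]
        rw [hconst x ω hω, hconst y ω' hω']
        by_cases hD : T ω ≤ K
        · rw [if_pos hD, if_pos (hTsame.1 hD)]
          exact hwxy
        · rw [if_neg hD, if_neg (fun h => hD (hTsame.2 h))]
    exact step_ineq hKn hM1 m' hinv
  -- terminal value
  have hBn : B n ≤ 1 := by
    simp only [hB]
    have hmax : ∀ k ∈ Finset.Icc 1 n, ∀ x : Fin n → Bool,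
        F (max k n) (bcount n x (max k n)) * mk k x = F n (bcount n x n) * mk k x := by
      intro k hk x
      rw [max_eq_right (Finset.mem_Icc.1 hk).2]
    rw [Finset.sum_congr rfl (fun k hk => Finset.sum_congr rfl (fun x _ => hmax k hk x))]
    rw [Finset.sum_comm]
    have hAx : ∀ x : Fin n → Bool, ∑ k ∈ Finset.Icc 1 n, mk k x = P (A x) := by
      intro x
      have hun : A x = ⋃ k ∈ Finset.Icc 1 n, (A x ∩ {ω | T ω = k}) := by
        ext ω
        simp only [Set.mem_iUnion, Set.mem_inter_iff, Set.mem_setOf_eq]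
        constructor
        · intro h1
          exact ⟨T ω, hTval ω, h1, rfl⟩
        · rintro ⟨k, -, h1, -⟩
          exact h1
      rw [hmk]
      rw [← measure_biUnion_finset ?hdisj2 (fun k _ => hAkmeas k x), ← hun]
      case hdisj2 =>
        intro k1 h1 k2 h2 hne
        apply Set.disjoint_left.2
        rintro ω ⟨-, hω1⟩ ⟨-, hω2⟩
        exact hne (by rw [← hω1, ← hω2])
    calc ∑ x : Fin n → Bool, ∑ k ∈ Finset.Icc 1 n, F n (bcount n x n) * mk k x
        = ∑ x : Fin n → Bool, F n (bcount n x n) * P (A x) := by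
          refine Finset.sum_congr rfl fun x _ => ?_
          rw [← Finset.mul_sum, hAx x]
      _ = ∑ x : Fin n → Bool, ENNReal.ofReal (freal Mr n (bcount n x n)) *
            ENNReal.ofReal ((1 - ρ) ^ (bcount n x n) * ρ ^ (n - bcount n x n)) := by
          refine Finset.sum_congr rfl fun x _ => ?_
          rw [hPA x, hF]
      _ ≤ 1 := final_bound hn ⟨hρ0, hρ1⟩ hMdef
  -- chain the inequalities
  have hchain : ∀ K, 1 ≤ K → K ≤ n → B 1 ≤ B K := by
    intro K
    induction K with
    | zero => omega
    | succ K ih =>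
      intro h1 h2
      rcases Nat.eq_zero_or_pos K with rfl | hKpos
      · exact le_refl _
      · exact le_trans (ih hKpos (by omega)) (hstep K hKpos (by omega))
  calc ∑ k ∈ Finset.Icc 1 n, ∑ x : Fin n → Bool, F k (bcount n x k) * mk k x
      = B 1 := hB1.symm
    _ ≤ B n := hchain n hn le_rfl
    _ ≤ 1 := hBn
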